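/- Fix a finite simple graph F with k vertices and an exchangeable array as in the Aldous–Hoover representation: ζ_{i,j} = f(u, U_i, U_j, U_{i,j}) with (U_i) and (U_{i,j}) i.i.d. uniform on [0,1]. Then the expectation of the injective homomorphism density (1/n^{↓k}) Σ_{injective (i₁,…,i_k)} ∏_{{j,l}∈E(F)} f(u, U_{i_j}, U_{i_l}, U_{i_j, i_l}) equals t(F, g_u), where g_u(x,y) := E[f(u, x, y, V)] for V uniform on [0,1] and n^{↓k} := n!/(n−k)!. -/

import Mathlib

open MeasureTheory ProbabilityTheory Set

noncomputable section

open Classical in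
/-- The set of (ordered) edge pairs of a finite simple graph on `Fin k`. -/
def edgePairs {k : ℕ} (G : SimpleGraph (Fin k)) : Finset (Fin k × Fin k) :=
  Finset.univ.filter (fun p : Fin k × Fin k => p.1 < p.2 ∧ G.Adj p.1 p.2)

/-- The homomorphism density `t(F, g)`. -/
def homDensity {k : ℕ} (G : SimpleGraph (Fin k)) (W : ℝ → ℝ → ℝ) : ℝ :=
  ∫ x : Fin k → ℝ in Set.univ.pi (fun _ => Icc (0:ℝ) 1),
    ∏ p ∈ edgePairs G, W (x p.1) (x p.2)

section Aux

variable {Ω : Type*} [MeasurableSpace Ω] {P : Measure Ω}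

lemma aux_integrable_of_bdd [IsFiniteMeasure P] {g : Ω → ℝ}
    (hg : Measurable g) (h : ∀ x, |g x| ≤ 1) : Integrable g P :=
  (integrable_const 1).mono' hg.aestronglyMeasurable
    (Filter.Eventually.of_forall fun x => by simpa using h x)

lemma aux_reindex {ι₁ ι₂ : Type*} {X : ι₂ → Ω → ℝ}
    (h : iIndepFun X P) {g : ι₁ → ι₂}
    (hg : Function.Injective g) :
    iIndepFun (fun i => X (g i)) P := by
  classical
  have hP : IsProbabilityMeasure P := h.isProbabilityMeasure
  cases isEmpty_or_nonempty ι₁ with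
  | inl h' => exact iIndepFun.of_subsingleton
  | inr h' =>
    rw [iIndepFun_iff_measure_inter_preimage_eq_mul] at h ⊢
    intro S sets hsets
    have hinv : ∀ i, Function.invFun g (g i) = i := fun i =>
      Function.leftInverse_invFun hg i
    have h1 : (⋂ i ∈ S, X (g i) ⁻¹' sets i)
        = ⋂ j ∈ S.image g, X j ⁻¹' sets (Function.invFun g j) := by
      rw [Finset.set_biInter_finset_image]
      exact Set.iInter₂_congr fun i _ => by rw [hinv]
    have h2 : (∏ i ∈ S, P (X (g i) ⁻¹' sets i))
        = ∏ j ∈ S.image g, P (X j ⁻¹' sets (Function.invFun g j)) := by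
      rw [Finset.prod_image (fun i _ j _ hij => hg hij)]
      exact Finset.prod_congr rfl fun i _ => by rw [hinv]
    rw [h1, h2]
    exact h (S.image g) fun j hj => by
      obtain ⟨i, hi, rfl⟩ := Finset.mem_image.1 hj
      rw [hinv]; exact hsets i hi

lemma aux_map_pi {ι₁ : Type*} [Fintype ι₁] [IsProbabilityMeasure P] {Y : ι₁ → Ω → ℝ}
    (hY : ∀ i, Measurable (Y i))
    (h : iIndepFun Y P) :
    Measure.map (fun ω i => Y i ω) P = Measure.pi (fun i => Measure.map (Y i) P) := by
  haveI : ∀ i, IsProbabilityMeasure (Measure.map (Y i) P) :=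
    fun i => Measure.isProbabilityMeasure_map (hY i).aemeasurable
  refine (Measure.pi_eq fun s hs => ?_).symm
  rw [Measure.map_apply (measurable_pi_iff.2 hY) (MeasurableSet.univ_pi hs)]
  have hpre : (fun ω i => Y i ω) ⁻¹' Set.pi Set.univ s = ⋂ i, Y i ⁻¹' s i := by
    ext ω; simp [Set.mem_univ_pi]
  rw [hpre, h.meas_iInter fun i => ⟨s i, hs i, rfl⟩]
  exact Finset.prod_congr rfl fun i _ => (Measure.map_apply (hY i) (hs i)).symm

lemma aux_integral_pi_prod {ι₁ : Type*} [Fintype ι₁] {E : ι₁ → Type*}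
    [∀ i, MeasurableSpace (E i)] (μ : ∀ i, Measure (E i)) [∀ i, SigmaFinite (μ i)]
    (f : (i : ι₁) → E i → ℝ) :
    ∫ x : ∀ i, E i, ∏ i, f i (x i) ∂(Measure.pi μ) = ∏ i, ∫ x, f i x ∂(μ i) := by
  letI : ∀ i, MeasureSpace (E i) := fun i => ⟨μ i⟩
  exact MeasureTheory.integral_fintype_prod_eq_prod f

lemma aux_isProb_lam : IsProbabilityMeasure (volume.restrict (Icc (0:ℝ) 1)) := by
  constructor
  rw [Measure.restrict_apply_univ, Real.volume_Icc]
  norm_num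

lemma aux_pi_restrict {k : ℕ} :
    Measure.pi (fun _ : Fin k => volume.restrict (Icc (0:ℝ) 1))
      = (volume : Measure (Fin k → ℝ)).restrict (Set.univ.pi fun _ => Icc (0:ℝ) 1) := by
  refine Measure.pi_eq fun s hs => ?_
  rw [Measure.restrict_apply (MeasurableSet.univ_pi hs), ← Set.pi_inter_distrib,
    volume_pi, Measure.pi_pi]
  exact Finset.prod_congr rfl fun i _ => (Measure.restrict_apply (hs i)).symm

end Aux

lemma aux_single {Ω : Type*} [MeasurableSpace Ω]
    (P : Measure Ω) [IsProbabilityMeasure P]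
    (f : ℝ → ℝ → ℝ → ℝ → ℝ)
    (hf_meas : Measurable (fun q : ℝ × ℝ × ℝ × ℝ => f q.1 q.2.1 q.2.2.1 q.2.2.2))
    (hf_bdd : ∀ a x y v, f a x y v ∈ Icc (-1:ℝ) 1)
    (Ui : ℕ → Ω → ℝ) (Uij : ℕ → ℕ → Ω → ℝ)
    (hUsymm : ∀ i j, Uij i j = Uij j i)
    (hmeas₁ : ∀ i, Measurable (Ui i)) (hmeas₂ : ∀ i j, Measurable (Uij i j))
    (hindep : iIndepFun
      (Sum.elim Ui (fun p : {p : ℕ × ℕ // p.1 < p.2} => Uij p.1.1 p.1.2)) P)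
    (hunif₁ : ∀ i, Measure.map (Ui i) P = volume.restrict (Icc (0:ℝ) 1))
    (hunif₂ : ∀ i j, i < j →
      Measure.map (Uij i j) P = volume.restrict (Icc (0:ℝ) 1))
    (u : ℝ) {k n : ℕ} (F : SimpleGraph (Fin k)) (ι : Fin k ↪ Fin n) :
    ∫ ω, ∏ p ∈ edgePairs F,
        f u (Ui (ι p.1) ω) (Ui (ι p.2) ω) (Uij (ι p.1) (ι p.2) ω) ∂P =
      homDensity F (fun x y => ∫ v in Icc (0:ℝ) 1, f u x y v) := by
  haveI hlamP : IsProbabilityMeasure (volume.restrict (Icc (0:ℝ) 1)) := aux_isProb_lam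
  set J := {p : Fin k × Fin k // p ∈ edgePairs F} with hJ
  have hlt : ∀ q : J, q.1.1 < q.1.2 := by
    intro q
    have hq := q.2
    simp only [edgePairs, Finset.mem_filter] at hq
    exact hq.2.1
  have hne : ∀ q : J, (ι q.1.1 : ℕ) ≠ (ι q.1.2 : ℕ) := by
    intro q h
    exact absurd (ι.injective (Fin.val_injective h)) (ne_of_lt (hlt q))
  -- the reindexing map
  set g : (Fin k ⊕ J) → (ℕ ⊕ {p : ℕ × ℕ // p.1 < p.2}) :=
    Sum.elim (fun j => Sum.inl (ι j : ℕ))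
      (fun q => Sum.inr ⟨(min (ι q.1.1 : ℕ) (ι q.1.2 : ℕ),
        max (ι q.1.1 : ℕ) (ι q.1.2 : ℕ)), min_lt_max.2 (hne q)⟩) with hgdef
  have hg : Function.Injective g := by
    rintro (a | a) (b | b) hab
    · simp only [hgdef, Sum.elim_inl, Sum.inl.injEq] at hab
      exact congrArg _ (ι.injective (Fin.val_injective hab))
    · simp [hgdef] at hab
    · simp [hgdef] at hab
    · simp only [hgdef, Sum.elim_inr, Sum.inr.injEq, Subtype.mk.injEq, Prod.mk.injEq] at hab
      have hcase : ((ι a.1.1 : ℕ) = (ι b.1.1 : ℕ) ∧ (ι a.1.2 : ℕ) = (ι b.1.2 : ℕ)) ∨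
          ((ι a.1.1 : ℕ) = (ι b.1.2 : ℕ) ∧ (ι a.1.2 : ℕ) = (ι b.1.1 : ℕ)) := by omega
      rcases hcase with ⟨h1, h2⟩ | ⟨h1, h2⟩
      · have e1 := ι.injective (Fin.val_injective h1)
        have e2 := ι.injective (Fin.val_injective h2)
        exact congrArg _ (Subtype.ext (Prod.ext e1 e2))
      · have e1 := ι.injective (Fin.val_injective h1)
        have e2 := ι.injective (Fin.val_injective h2)
        have l1 := hlt a
        have l2 := hlt b
        rw [e1] at l1
        rw [← e2] at l2
        exact absurd (l1.trans l2) (lt_irrefl _)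
  set X := Sum.elim Ui (fun p : {p : ℕ × ℕ // p.1 < p.2} => Uij p.1.1 p.1.2) with hXdef
  set Y : (Fin k ⊕ J) → Ω → ℝ := fun i => X (g i) with hYdef
  have hYindep : iIndepFun Y P := aux_reindex hindep hg
  have hYmeas : ∀ i, Measurable (Y i) := by
    rintro (j | q)
    · exact hmeas₁ _
    · exact hmeas₂ _ _
  have hYmap : ∀ i, Measure.map (Y i) P = volume.restrict (Icc (0:ℝ) 1) := by
    rintro (j | q)
    · exact hunif₁ _
    · exact hunif₂ _ _ (min_lt_max.2 (hne q))
  have hmap : Measure.map (fun ω i => Y i ω) P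
      = Measure.pi (fun _ : Fin k ⊕ J => volume.restrict (Icc (0:ℝ) 1)) := by
    rw [aux_map_pi hYmeas hYindep]
    exact congrArg Measure.pi (funext hYmap)
  set G : ((Fin k ⊕ J) → ℝ) → ℝ := fun x =>
    ∏ q ∈ (edgePairs F).attach, f u (x (Sum.inl q.1.1)) (x (Sum.inl q.1.2)) (x (Sum.inr q))
    with hGdef
  have hGmeas : Measurable G := by
    refine Finset.measurable_prod _ fun q _ => ?_
    have hc : Measurable (fun x : (Fin k ⊕ J) → ℝ =>
        ((u, x (Sum.inl q.1.1), x (Sum.inl q.1.2), x (Sum.inr q)) : ℝ × ℝ × ℝ × ℝ)) := by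
      fun_prop
    exact hf_meas.comp hc
  have hGbdd : ∀ x, |G x| ≤ 1 := by
    intro x
    rw [hGdef, Finset.abs_prod]
    refine Finset.prod_le_one (fun q _ => abs_nonneg _) fun q _ => ?_
    exact abs_le.2 ⟨(hf_bdd _ _ _ _).1, (hf_bdd _ _ _ _).2⟩
  have huminmax : ∀ a b : ℕ, Uij (min a b) (max a b) = Uij a b := by
    intro a b
    rcases le_total a b with h | h
    · rw [min_eq_left h, max_eq_right h]
    · rw [min_eq_right h, max_eq_left h, hUsymm]
  have key : ∀ ω, (∏ p ∈ edgePairs F,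
      f u (Ui (ι p.1) ω) (Ui (ι p.2) ω) (Uij (ι p.1) (ι p.2) ω))
      = G (fun i => Y i ω) := by
    intro ω
    rw [← Finset.prod_attach (edgePairs F)
      (fun p => f u (Ui (ι p.1) ω) (Ui (ι p.2) ω) (Uij (ι p.1) (ι p.2) ω))]
    refine Finset.prod_congr rfl fun q _ => ?_
    show f u (Ui (ι q.1.1) ω) (Ui (ι q.1.2) ω) (Uij (ι q.1.1) (ι q.1.2) ω)
      = f u (Ui (ι q.1.1) ω) (Ui (ι q.1.2) ω)
          (Uij (min (ι q.1.1 : ℕ) (ι q.1.2 : ℕ)) (max (ι q.1.1 : ℕ) (ι q.1.2 : ℕ)) ω)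
    rw [huminmax]
  calc
    ∫ ω, ∏ p ∈ edgePairs F,
        f u (Ui (ι p.1) ω) (Ui (ι p.2) ω) (Uij (ι p.1) (ι p.2) ω) ∂P
      = ∫ ω, G (fun i => Y i ω) ∂P :=
        integral_congr_ae (Filter.Eventually.of_forall fun ω => key ω)
    _ = ∫ x, G x ∂(Measure.map (fun ω i => Y i ω) P) :=
        (integral_map (measurable_pi_iff.2 hYmeas).aemeasurable
          hGmeas.aestronglyMeasurable).symm
    _ = ∫ x, G x ∂(Measure.pi (fun _ : Fin k ⊕ J => volume.restrict (Icc (0:ℝ) 1))) := by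
        rw [hmap]
    _ = homDensity F (fun x y => ∫ v in Icc (0:ℝ) 1, f u x y v) := by
        set lam := volume.restrict (Icc (0:ℝ) 1) with hlam
        have hpres := measurePreserving_sumPiEquivProdPi_symm
          (fun _ : Fin k ⊕ J => lam)
        rw [← hpres.integral_comp' G]
        have hint : Integrable (fun z : (Fin k → ℝ) × (J → ℝ) =>
            G ((MeasurableEquiv.sumPiEquivProdPi (fun _ : Fin k ⊕ J => ℝ)).symm z))
            ((Measure.pi fun _ : Fin k => lam).prod (Measure.pi fun _ : J => lam)) :=
          aux_integrable_of_bdd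
            (hGmeas.comp (MeasurableEquiv.sumPiEquivProdPi _).symm.measurable)
            (fun z => hGbdd _)
        rw [MeasureTheory.integral_prod _ hint]
        have hinner : ∀ x : Fin k → ℝ,
            (∫ y : J → ℝ, G ((MeasurableEquiv.sumPiEquivProdPi
              (fun _ : Fin k ⊕ J => ℝ)).symm (x, y)) ∂(Measure.pi fun _ : J => lam))
            = ∏ p ∈ edgePairs F, (fun a b => ∫ v in Icc (0:ℝ) 1, f u a b v) (x p.1) (x p.2) := by
          intro x
          have hGsymm : ∀ y : J → ℝ,
              G ((MeasurableEquiv.sumPiEquivProdPi (fun _ : Fin k ⊕ J => ℝ)).symm (x, y))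
              = ∏ q ∈ (edgePairs F).attach, f u (x q.1.1) (x q.1.2) (y q) := by
            intro y
            rfl
          simp_rw [hGsymm]
          have hprod := aux_integral_pi_prod (fun _ : J => lam)
            (fun q : J => fun v : ℝ => f u (x q.1.1) (x q.1.2) v)
          rw [← Finset.univ_eq_attach, hprod, Finset.univ_eq_attach,
            ← Finset.prod_attach (edgePairs F)
              (fun p => (fun a b => ∫ v in Icc (0:ℝ) 1, f u a b v) (x p.1) (x p.2))]
        simp_rw [hinner]
        rw [homDensity, ← aux_pi_restrict]

/-- in the Aldous–Hoover setting, the expected injective homomorphism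
density of the sampled array `ζ_{i,j} = f(u, U_i, U_j, U_{i,j})` equals `t(F, g_u)`,
where `g_u(x,y) = E[f(u,x,y,V)]` for `V` uniform on `[0,1]`. -/
theorem expected_injective_homDensity {Ω : Type*} [MeasurableSpace Ω]
    (P : Measure Ω) [IsProbabilityMeasure P]
    (f : ℝ → ℝ → ℝ → ℝ → ℝ)
    (hf_meas : Measurable (fun q : ℝ × ℝ × ℝ × ℝ => f q.1 q.2.1 q.2.2.1 q.2.2.2))
    (hf_bdd : ∀ a x y v, f a x y v ∈ Icc (-1:ℝ) 1)
    (hf_symm : ∀ a x y v, f a x y v = f a y x v)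
    (Ui : ℕ → Ω → ℝ) (Uij : ℕ → ℕ → Ω → ℝ)
    (hUsymm : ∀ i j, Uij i j = Uij j i)
    (hmeas₁ : ∀ i, Measurable (Ui i)) (hmeas₂ : ∀ i j, Measurable (Uij i j))
    (hindep : iIndepFun
      (Sum.elim Ui (fun p : {p : ℕ × ℕ // p.1 < p.2} => Uij p.1.1 p.1.2)) P)
    (hunif₁ : ∀ i, Measure.map (Ui i) P = volume.restrict (Icc (0:ℝ) 1))
    (hunif₂ : ∀ i j, i < j →
      Measure.map (Uij i j) P = volume.restrict (Icc (0:ℝ) 1))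
    (u : ℝ) (hu : u ∈ Icc (0:ℝ) 1)
    {k n : ℕ} (hkn : k ≤ n) (F : SimpleGraph (Fin k)) :
    ∫ ω, (1 / (n.descFactorial k : ℝ)) *
        ∑ ι : Fin k ↪ Fin n, ∏ p ∈ edgePairs F,
          f u (Ui (ι p.1) ω) (Ui (ι p.2) ω) (Uij (ι p.1) (ι p.2) ω) ∂P =
      homDensity F (fun x y => ∫ v in Icc (0:ℝ) 1, f u x y v) := by
  have hInt : ∀ ι : Fin k ↪ Fin n, Integrable (fun ω => ∏ p ∈ edgePairs F,
      f u (Ui (ι p.1) ω) (Ui (ι p.2) ω) (Uij (ι p.1) (ι p.2) ω)) P := by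
    intro ι
    refine aux_integrable_of_bdd ?_ ?_
    · refine Finset.measurable_prod _ fun p _ => ?_
      exact hf_meas.comp (measurable_const.prodMk ((hmeas₁ _).prodMk
        ((hmeas₁ _).prodMk (hmeas₂ _ _))))
    · intro ω
      rw [Finset.abs_prod]
      refine Finset.prod_le_one (fun p _ => abs_nonneg _) fun p _ => ?_
      exact abs_le.2 ⟨(hf_bdd _ _ _ _).1, (hf_bdd _ _ _ _).2⟩
  rw [integral_const_mul, integral_finset_sum _ (fun ι _ => hInt ι)]
  rw [Finset.sum_congr rfl (fun (ι : Fin k ↪ Fin n) _ =>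
    aux_single P f hf_meas hf_bdd Ui Uij hUsymm hmeas₁ hmeas₂ hindep hunif₁ hunif₂ u F ι)]
  have hcard : (Finset.univ : Finset (Fin k ↪ Fin n)).card = n.descFactorial k := by
    rw [Finset.card_univ, Fintype.card_embedding_eq, Fintype.card_fin, Fintype.card_fin]
  rw [Finset.sum_const, hcard, nsmul_eq_mul]
  have hc : (n.descFactorial k : ℝ) ≠ 0 := by
    refine Nat.cast_ne_zero.2 fun h0 => ?_
    exact absurd (Nat.descFactorial_eq_zero_iff_lt.1 h0) (not_lt.2 hkn)
  rw [one_div, inv_mul_cancel_left₀ hc]
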